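/- The map σ ↦ ω_σ, where ω_σ is the alternating trilinear form on ℝ³ ⊗ ℝ⁴ determined on pure tensors by ω_σ(x₁ ⊗ q₁, x₂ ⊗ q₂, x₃ ⊗ q₃) := det(x₁|x₂|x₃)·σ(q₁, q₂, q₃), is an ℝ-linear bijection from the space of symmetric trilinear forms σ on ℝ⁴ onto the space of SO⁰(1,2)-invariant alternating trilinear forms on ℝ³ ⊗ ℝ⁴ (those ω with ω(g·u₁, g·u₂, g·u₃) = ω(u₁, u₂, u₃) for all g ∈ SO⁰(1,2)). -/

import Mathlib

/- Statement 12: SO⁰(1,2)-invariant alternating 3-forms on ℝ³ ⊗ ℝ⁴ correspond to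
symmetric trilinear forms on ℝ⁴. -/

open Matrix TensorProduct

noncomputable section

/-- The real matrix η₃ = diag(-1,1,1). -/
def eta3 : Matrix (Fin 3) (Fin 3) ℝ := Matrix.diagonal ![-1, 1, 1]

/-- SO⁰(1,2): the identity component of {g : gᵀ η₃ g = η₃}. -/
def SOo12 : Set (Matrix (Fin 3) (Fin 3) ℝ) :=
  connectedComponentIn {g : Matrix (Fin 3) (Fin 3) ℝ | gᵀ * eta3 * g = eta3} 1

/-- The determinant of the 3×3 matrix with columns x₁, x₂, x₃. -/
def colDet (x₁ x₂ x₃ : Fin 3 → ℝ) : ℝ :=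
  (Matrix.of fun i j => ![x₁, x₂, x₃] j i).det

/-- ℝ³ ⊗ ℝ⁴ as a real vector space. -/
abbrev T34 := TensorProduct ℝ (Fin 3 → ℝ) (Fin 4 → ℝ)

/-- A trilinear form on ℝ⁴ is symmetric. -/
def IsSymm3 (σ : (Fin 4 → ℝ) →ₗ[ℝ] (Fin 4 → ℝ) →ₗ[ℝ] (Fin 4 → ℝ) →ₗ[ℝ] ℝ) : Prop :=
  ∀ a b c : Fin 4 → ℝ, σ a b c = σ b a c ∧ σ a b c = σ a c b

/-- The defining relation: ω is determined on pure tensors by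
ω(x₁⊗q₁, x₂⊗q₂, x₃⊗q₃) = det(x₁|x₂|x₃)·σ(q₁,q₂,q₃). -/
def RelOmega (σ : (Fin 4 → ℝ) →ₗ[ℝ] (Fin 4 → ℝ) →ₗ[ℝ] (Fin 4 → ℝ) →ₗ[ℝ] ℝ)
    (ω : AlternatingMap ℝ T34 ℝ (Fin 3)) : Prop :=
  ∀ (x₁ x₂ x₃ : Fin 3 → ℝ) (q₁ q₂ q₃ : Fin 4 → ℝ),
    ω ![x₁ ⊗ₜ[ℝ] q₁, x₂ ⊗ₜ[ℝ] q₂, x₃ ⊗ₜ[ℝ] q₃] = colDet x₁ x₂ x₃ * σ q₁ q₂ q₃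

/-- ω is SO⁰(1,2)-invariant, for the action g·(x ⊗ q) = (gx) ⊗ q. -/
def IsInvOmega (ω : AlternatingMap ℝ T34 ℝ (Fin 3)) : Prop :=
  ∀ g ∈ SOo12, ∀ u : Fin 3 → T34,
    ω (fun i => TensorProduct.map g.mulVecLin LinearMap.id (u i)) = ω u


/-! ### Auxiliary definitions and lemmas -/

abbrev M3' := Fin 3 → ℝ
abbrev Q4' := Fin 4 → ℝ

/-- helper to build trilinear forms -/
def mk3 {M₁ M₂ M₃ : Type*} [AddCommMonoid M₁] [AddCommMonoid M₂] [AddCommMonoid M₃]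
    [Module ℝ M₁] [Module ℝ M₂] [Module ℝ M₃]
    (f : M₁ → M₂ → M₃ → ℝ)
    (ha₁ : ∀ x x' y z, f (x + x') y z = f x y z + f x' y z)
    (hs₁ : ∀ (c : ℝ) x y z, f (c • x) y z = c * f x y z)
    (ha₂ : ∀ x y y' z, f x (y + y') z = f x y z + f x y' z)
    (hs₂ : ∀ (c : ℝ) x y z, f x (c • y) z = c * f x y z)
    (ha₃ : ∀ x y z z', f x y (z + z') = f x y z + f x y z')
    (hs₃ : ∀ (c : ℝ) x y z, f x y (c • z) = c * f x y z) :
    M₁ →ₗ[ℝ] M₂ →ₗ[ℝ] M₃ →ₗ[ℝ] ℝ where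
  toFun x :=
    { toFun := fun y =>
        { toFun := fun z => f x y z
          map_add' := ha₃ x y
          map_smul' := fun c z => hs₃ c x y z }
      map_add' := fun y y' => LinearMap.ext fun z => ha₂ x y y' z
      map_smul' := fun c y => LinearMap.ext fun z => hs₂ c x y z }
  map_add' := fun x x' => LinearMap.ext fun y => LinearMap.ext fun z => ha₁ x x' y z
  map_smul' := fun c x => LinearMap.ext fun y => LinearMap.ext fun z => hs₁ c x y z

@[simp] lemma mk3_apply {M₁ M₂ M₃ : Type*} [AddCommMonoid M₁] [AddCommMonoid M₂] [AddCommMonoid M₃]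
    [Module ℝ M₁] [Module ℝ M₂] [Module ℝ M₃] (f : M₁ → M₂ → M₃ → ℝ)
    (ha₁ hs₁ ha₂ hs₂ ha₃ hs₃) (x y z) :
    mk3 f ha₁ hs₁ ha₂ hs₂ ha₃ hs₃ x y z = f x y z := rfl

/-- the determinant trilinear form on columns -/
def detB : M3' →ₗ[ℝ] M3' →ₗ[ℝ] M3' →ₗ[ℝ] ℝ :=
  mk3 (fun x y z => x 0 * (y 1 * z 2 - y 2 * z 1) - x 1 * (y 0 * z 2 - y 2 * z 0)
      + x 2 * (y 0 * z 1 - y 1 * z 0))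
    (by intros; simp [Pi.add_apply]; ring)
    (by intros; simp [Pi.smul_apply, smul_eq_mul]; ring)
    (by intros; simp [Pi.add_apply]; ring)
    (by intros; simp [Pi.smul_apply, smul_eq_mul]; ring)
    (by intros; simp [Pi.add_apply]; ring)
    (by intros; simp [Pi.smul_apply, smul_eq_mul]; ring)

lemma colDet_eq (x y z : Fin 3 → ℝ) : colDet x y z = detB x y z := by
  simp [colDet, Matrix.det_fin_three, detB]
  ring

lemma detB_swap₁₂ (x y z : Fin 3 → ℝ) : detB y x z = -detB x y z := by simp [detB]; ring
lemma detB_swap₂₃ (x y z : Fin 3 → ℝ) : detB x z y = -detB x y z := by simp [detB]; ring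

section PhiSec
variable (B : M3' →ₗ[ℝ] M3' →ₗ[ℝ] M3' →ₗ[ℝ] ℝ)
variable (σ : Q4' →ₗ[ℝ] Q4' →ₗ[ℝ] Q4' →ₗ[ℝ] ℝ)

def Phi : T34 →ₗ[ℝ] T34 →ₗ[ℝ] T34 →ₗ[ℝ] ℝ :=
  TensorProduct.curry (TensorProduct.curry
    ((LinearMap.mul' ℝ ℝ) ∘ₗ
      (TensorProduct.map (TensorProduct.lift (TensorProduct.lift B))
        (TensorProduct.lift (TensorProduct.lift σ))) ∘ₗ
      (TensorProduct.tensorTensorTensorComm ℝ (M3' ⊗[ℝ] M3') (Q4' ⊗[ℝ] Q4') M3' Q4').toLinearMap ∘ₗ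
      (TensorProduct.map (TensorProduct.tensorTensorTensorComm ℝ M3' Q4' M3' Q4').toLinearMap
        LinearMap.id)))

@[simp] lemma Phi_tmul (x y z : M3') (q r s : Q4') :
    Phi B σ (x ⊗ₜ q) (y ⊗ₜ r) (z ⊗ₜ s) = B x y z * σ q r s := by
  simp [Phi, TensorProduct.curry_apply, TensorProduct.map_tmul,
    TensorProduct.tensorTensorTensorComm_tmul, LinearMap.mul'_apply]

/-- two trilinear maps on T34 agreeing on pure tensors agree -/
lemma ext3 {f g : T34 →ₗ[ℝ] T34 →ₗ[ℝ] T34 →ₗ[ℝ] ℝ}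
    (h : ∀ x y z q r s, f (x ⊗ₜ q) (y ⊗ₜ r) (z ⊗ₜ s) = g (x ⊗ₜ q) (y ⊗ₜ r) (z ⊗ₜ s)) :
    f = g := by
  refine LinearMap.ext fun u => LinearMap.ext fun v => LinearMap.ext fun w => ?_
  induction u using TensorProduct.induction_on with
  | zero => rw [f.map_zero, g.map_zero]
  | tmul x q =>
    induction v using TensorProduct.induction_on with
    | zero => rw [(f (x ⊗ₜ q)).map_zero, (g (x ⊗ₜ q)).map_zero]
    | tmul y r =>
      induction w using TensorProduct.induction_on with
      | zero => rw [(f (x ⊗ₜ q) (y ⊗ₜ r)).map_zero, (g (x ⊗ₜ q) (y ⊗ₜ r)).map_zero]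
      | tmul z s => exact h x y z q r s
      | add w₁ w₂ h₁ h₂ =>
        rw [(f (x ⊗ₜ q) (y ⊗ₜ r)).map_add, (g (x ⊗ₜ q) (y ⊗ₜ r)).map_add, h₁, h₂]
    | add v₁ v₂ h₁ h₂ =>
      rw [(f (x ⊗ₜ q)).map_add, (g (x ⊗ₜ q)).map_add, LinearMap.add_apply, LinearMap.add_apply,
        h₁, h₂]
  | add u₁ u₂ h₁ h₂ =>
    rw [f.map_add, g.map_add, LinearMap.add_apply, LinearMap.add_apply, LinearMap.add_apply,
      LinearMap.add_apply, h₁, h₂]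
end PhiSec

section upd
variable {α : Type*} (a b c x : α)
lemma upd0 : Function.update ![a,b,c] 0 x = ![x,b,c] := by
  funext i; fin_cases i <;> simp [Function.update]
lemma upd1 : Function.update ![a,b,c] 1 x = ![a,x,c] := by
  funext i; fin_cases i <;> simp [Function.update]
lemma upd2 : Function.update ![a,b,c] 2 x = ![a,b,x] := by
  funext i; fin_cases i <;> simp [Function.update]
end upd

section slots
variable (ω : AlternatingMap ℝ T34 ℝ (Fin 3)) (a a' b c : T34) (t : ℝ)

lemma ω_add₁ : ω ![a + a', b, c] = ω ![a, b, c] + ω ![a', b, c] := by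
  rw [show (![a + a', b, c] : Fin 3 → T34) = Function.update ![a,b,c] 0 (a + a') from
    (upd0 a b c _).symm, AlternatingMap.map_update_add, upd0, upd0]
lemma ω_add₂ : ω ![b, a + a', c] = ω ![b, a, c] + ω ![b, a', c] := by
  rw [show (![b, a + a', c] : Fin 3 → T34) = Function.update ![b,a,c] 1 (a + a') from
    (upd1 b a c _).symm, AlternatingMap.map_update_add, upd1, upd1]
lemma ω_add₃ : ω ![b, c, a + a'] = ω ![b, c, a] + ω ![b, c, a'] := by
  rw [show (![b, c, a + a'] : Fin 3 → T34) = Function.update ![b,c,a] 2 (a + a') from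
    (upd2 b c a _).symm, AlternatingMap.map_update_add, upd2, upd2]
lemma ω_smul₁ : ω ![t • a, b, c] = t * ω ![a, b, c] := by
  rw [show (![t • a, b, c] : Fin 3 → T34) = Function.update ![a,b,c] 0 (t • a) from
    (upd0 a b c _).symm, AlternatingMap.map_update_smul, upd0, smul_eq_mul]
lemma ω_smul₂ : ω ![b, t • a, c] = t * ω ![b, a, c] := by
  rw [show (![b, t • a, c] : Fin 3 → T34) = Function.update ![b,a,c] 1 (t • a) from
    (upd1 b a c _).symm, AlternatingMap.map_update_smul, upd1, smul_eq_mul]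
lemma ω_smul₃ : ω ![b, c, t • a] = t * ω ![b, c, a] := by
  rw [show (![b, c, t • a] : Fin 3 → T34) = Function.update ![b,c,a] 2 (t • a) from
    (upd2 b c a _).symm, AlternatingMap.map_update_smul, upd2, smul_eq_mul]
lemma ω_swap₁₂ : ω ![b, a, c] = -ω ![a, b, c] := by
  have h := ω.map_swap (v := ![a,b,c]) (i := 0) (j := 1) (by decide)
  have e : ![a,b,c] ∘ Equiv.swap (0:Fin 3) 1 = ![b,a,c] := by
    funext i; fin_cases i <;> simp [Equiv.swap_apply_def]
  rw [e] at h; exact h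
lemma ω_swap₂₃ : ω ![a, c, b] = -ω ![a, b, c] := by
  have h := ω.map_swap (v := ![a,b,c]) (i := 1) (j := 2) (by decide)
  have e : ![a,b,c] ∘ Equiv.swap (1:Fin 3) 2 = ![a,c,b] := by
    funext i; fin_cases i <;> simp [Equiv.swap_apply_def]
  rw [e] at h; exact h
end slots

/-- alternating maps agreeing on pure tensors agree -/
lemma alt_ext {ω₁ ω₂ : AlternatingMap ℝ T34 ℝ (Fin 3)}
    (h : ∀ (x y z : Fin 3 → ℝ) (q r s : Fin 4 → ℝ),
      ω₁ ![x ⊗ₜ q, y ⊗ₜ r, z ⊗ₜ s] = ω₂ ![x ⊗ₜ q, y ⊗ₜ r, z ⊗ₜ s]) :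
    ω₁ = ω₂ := by
  ext v
  have hv : v = ![v 0, v 1, v 2] := by
    funext i; fin_cases i <;> rfl
  rw [hv]
  generalize v 0 = u; generalize v 1 = u'; generalize v 2 = u''
  clear hv v
  induction u using TensorProduct.induction_on with
  | zero =>
    rw [show (0 : T34) = (0:ℝ) • 0 from (zero_smul ℝ (0:T34)).symm, ω_smul₁, ω_smul₁,
      zero_mul, zero_mul]
  | tmul x q =>
    induction u' using TensorProduct.induction_on with
    | zero =>
      rw [show (0 : T34) = (0:ℝ) • 0 from (zero_smul ℝ (0:T34)).symm, ω_smul₂, ω_smul₂,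
        zero_mul, zero_mul]
    | tmul y r =>
      induction u'' using TensorProduct.induction_on with
      | zero =>
        rw [show (0 : T34) = (0:ℝ) • 0 from (zero_smul ℝ (0:T34)).symm, ω_smul₃, ω_smul₃,
          zero_mul, zero_mul]
      | tmul z s => exact h x y z q r s
      | add w₁ w₂ h₁ h₂ => rw [ω_add₃, ω_add₃, h₁, h₂]
    | add v₁ v₂ h₁ h₂ => rw [ω_add₂, ω_add₂, h₁, h₂]
  | add u₁ u₂ h₁ h₂ => rw [ω_add₁, ω_add₁, h₁, h₂]

section omegaOfSec
set_option linter.unreachableTactic false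
set_option linter.unusedTactic false
variable (Phi' : T34 →ₗ[ℝ] T34 →ₗ[ℝ] T34 →ₗ[ℝ] ℝ)
variable (h12 : ∀ u v w : T34, Phi' u v w = -Phi' v u w)
variable (h23 : ∀ u v w : T34, Phi' u v w = -Phi' u w v)

def omegaOf : AlternatingMap ℝ T34 ℝ (Fin 3) where
  toFun v := Phi' (v 0) (v 1) (v 2)
  map_update_add' := by
    intro dec m i a b
    obtain rfl : dec = instDecidableEqFin 3 := Subsingleton.elim _ _
    fin_cases i <;>
      simp [Function.update_self, Function.update_of_ne, Fin.isValue, map_add,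
        LinearMap.add_apply]
  map_update_smul' := by
    intro dec m i c a
    obtain rfl : dec = instDecidableEqFin 3 := Subsingleton.elim _ _
    fin_cases i <;>
      simp [Function.update_self, Function.update_of_ne, Fin.isValue, LinearMap.map_smul,
        LinearMap.smul_apply]
  map_eq_zero_of_eq' := by
    have z12 : ∀ a c : T34, Phi' a a c = 0 := fun a c => by have := h12 a a c; linarith
    have z23 : ∀ a b : T34, Phi' a b b = 0 := fun a b => by have := h23 a b b; linarith
    have z13 : ∀ a b : T34, Phi' a b a = 0 := fun a b => by
      have := h23 a b a; rw [this, z12]; ring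
    intro v i j hv hij
    fin_cases i <;> fin_cases j <;> simp only [Fin.isValue, Fin.reduceFinMk] at hv hij ⊢ <;>
      first
        | exact absurd rfl hij
        | (rw [hv]; first | exact z12 _ _
                          | exact z23 _ _
                          | exact z13 _ _)
        | (rw [← hv]; first | exact z12 _ _
                            | exact z23 _ _
                            | exact z13 _ _)

@[simp] lemma omegaOf_apply (v : Fin 3 → T34) :
    omegaOf Phi' h12 h23 v = Phi' (v 0) (v 1) (v 2) := rfl
end omegaOfSec

section Part1
variable {σ : Q4' →ₗ[ℝ] Q4' →ₗ[ℝ] Q4' →ₗ[ℝ] ℝ}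

lemma Phi_anti12 (hσ : IsSymm3 σ) (u v w : T34) :
    Phi detB σ u v w = -Phi detB σ v u w := by
  have h : Phi detB σ = (-1:ℝ) • ((Phi detB σ).flip) := by
    refine ext3 fun x y z q r s => ?_
    have : ((-1:ℝ) • ((Phi detB σ).flip)) (x ⊗ₜ q) (y ⊗ₜ r) (z ⊗ₜ s)
        = -(Phi detB σ (y ⊗ₜ r) (x ⊗ₜ q) (z ⊗ₜ s)) := by simp
    rw [this, Phi_tmul, Phi_tmul, detB_swap₁₂, (hσ q r s).1]
    ring
  conv_lhs => rw [h]
  simp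

lemma Phi_anti23 (hσ : IsSymm3 σ) (u v w : T34) :
    Phi detB σ u v w = -Phi detB σ u w v := by
  have h : Phi detB σ = (-1:ℝ) • (LinearMap.lflip.toLinearMap ∘ₗ Phi detB σ) := by
    refine ext3 fun x y z q r s => ?_
    have : ((-1:ℝ) • (LinearMap.lflip.toLinearMap ∘ₗ Phi detB σ)) (x ⊗ₜ q) (y ⊗ₜ r) (z ⊗ₜ s)
        = -(Phi detB σ (x ⊗ₜ q) (z ⊗ₜ s) (y ⊗ₜ r)) := by simp
    rw [this, Phi_tmul, Phi_tmul, detB_swap₂₃, (hσ q r s).2]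
    ring
  conv_lhs => rw [h]
  simp

def omegaSigma (hσ : IsSymm3 σ) : AlternatingMap ℝ T34 ℝ (Fin 3) :=
  omegaOf (Phi detB σ) (Phi_anti12 hσ) (Phi_anti23 hσ)

lemma omegaSigma_rel (hσ : IsSymm3 σ) : RelOmega σ (omegaSigma hσ) := by
  intro x y z q r s
  show Phi detB σ (![x ⊗ₜ q, y ⊗ₜ r, z ⊗ₜ s] 0) (![x ⊗ₜ q, y ⊗ₜ r, z ⊗ₜ s] 1)
      (![x ⊗ₜ q, y ⊗ₜ r, z ⊗ₜ s] 2) = colDet x y z * σ q r s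
  simp only [Matrix.cons_val_zero, Matrix.cons_val_one, Matrix.head_cons,
    Matrix.cons_val_two, Matrix.tail_cons, Phi_tmul, colDet_eq]

lemma part1 (σ) (hσ : IsSymm3 σ) : ∃! ω : AlternatingMap ℝ T34 ℝ (Fin 3), RelOmega σ ω :=
  ⟨omegaSigma hσ, omegaSigma_rel hσ, fun ω hω =>
    alt_ext fun x y z q r s => by rw [hω, omegaSigma_rel hσ]⟩
end Part1

/-! ### determinant of elements of SOo12 -/

lemma quadric_det {g : Matrix (Fin 3) (Fin 3) ℝ} (hg : gᵀ * eta3 * g = eta3) :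
    g.det = 1 ∨ g.det = -1 := by
  have h := congrArg Matrix.det hg
  rw [Matrix.det_mul, Matrix.det_mul, Matrix.det_transpose] at h
  have hd : eta3.det = -1 := by
    simp [eta3, Fin.prod_univ_three]
  rw [hd] at h
  exact mul_self_eq_one_iff.mp (by nlinarith)

lemma one_mem_quadric : (1 : Matrix (Fin 3) (Fin 3) ℝ) ∈
    {g : Matrix (Fin 3) (Fin 3) ℝ | gᵀ * eta3 * g = eta3} := by
  simp [Set.mem_setOf_eq]

lemma SOo12_det {g : Matrix (Fin 3) (Fin 3) ℝ} (hg : g ∈ SOo12) : g.det = 1 := by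
  have hsub : SOo12 ⊆ {g : Matrix (Fin 3) (Fin 3) ℝ | gᵀ * eta3 * g = eta3} :=
    connectedComponentIn_subset _ _
  rcases quadric_det (hsub hg) with h | h
  · exact h
  · exfalso
    have hpre : IsPreconnected SOo12 := isPreconnected_connectedComponentIn
    have h1 : (1 : Matrix (Fin 3) (Fin 3) ℝ) ∈ SOo12 :=
      mem_connectedComponentIn one_mem_quadric
    have hcont : ContinuousOn (fun m : Matrix (Fin 3) (Fin 3) ℝ => m.det) SOo12 :=
      (continuous_id.matrix_det).continuousOn
    obtain ⟨m, hm, hm0⟩ := hpre.intermediate_value₂ (g := fun _ => (0:ℝ)) hg h1 hcont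
      continuousOn_const (by rw [h]; norm_num) (by rw [Matrix.det_one]; norm_num)
    rcases quadric_det (hsub hm) with h' | h' <;> rw [hm0] at h' <;> norm_num at h'

lemma colDet_mulVec (g : Matrix (Fin 3) (Fin 3) ℝ) (x y z : Fin 3 → ℝ) :
    colDet (g.mulVec x) (g.mulVec y) (g.mulVec z) = g.det * colDet x y z := by
  have : (Matrix.of fun i j => ![g.mulVec x, g.mulVec y, g.mulVec z] j i)
      = g * (Matrix.of fun i j => ![x, y, z] j i) := by
    ext i j
    fin_cases j <;>
      simp [Matrix.mul_apply, Matrix.mulVec, dotProduct, Fin.sum_univ_three]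
  rw [colDet, this, Matrix.det_mul, colDet]

lemma part2 (σ) (hσ : IsSymm3 σ) (ω) (hω : RelOmega σ ω) : IsInvOmega ω := by
  intro g hg u
  have hdet := SOo12_det hg
  have heq : ω.compLinearMap (TensorProduct.map g.mulVecLin LinearMap.id) = ω := by
    refine alt_ext fun x y z q r s => ?_
    have hc : (TensorProduct.map g.mulVecLin LinearMap.id) ∘ ![x ⊗ₜ q, y ⊗ₜ r, z ⊗ₜ s]
        = ![(g.mulVec x) ⊗ₜ q, (g.mulVec y) ⊗ₜ r, (g.mulVec z) ⊗ₜ s] := by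
      funext i
      fin_cases i <;> simp [TensorProduct.map_tmul]
    rw [AlternatingMap.compLinearMap_apply]
    rw [show (fun i => (TensorProduct.map g.mulVecLin LinearMap.id) (![x ⊗ₜ q, y ⊗ₜ r, z ⊗ₜ s] i))
        = ![(g.mulVec x) ⊗ₜ q, (g.mulVec y) ⊗ₜ r, (g.mulVec z) ⊗ₜ s] from hc]
    rw [hω, hω, colDet_mulVec, hdet, one_mul]
  calc ω (fun i => TensorProduct.map g.mulVecLin LinearMap.id (u i))
      = ω.compLinearMap (TensorProduct.map g.mulVecLin LinearMap.id) u := rfl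
    _ = ω u := by rw [heq]

lemma part3 (σ σ' ω ω') (h : RelOmega σ ω) (h' : RelOmega σ' ω') :
    RelOmega (σ + σ') (ω + ω') := by
  intro x y z q r s
  simp only [AlternatingMap.add_apply, LinearMap.add_apply, h x y z q r s, h' x y z q r s]
  ring

lemma part4 (c : ℝ) (σ ω) (h : RelOmega σ ω) : RelOmega (c • σ) (c • ω) := by
  intro x y z q r s
  simp only [AlternatingMap.smul_apply, LinearMap.smul_apply, smul_eq_mul, h x y z q r s]
  ring

def E3 (i : Fin 3) : Fin 3 → ℝ := Pi.single i 1

lemma vec_expand (x : Fin 3 → ℝ) : x = x 0 • E3 0 + x 1 • E3 1 + x 2 • E3 2 := by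
  funext j; fin_cases j <;> simp [E3, Pi.single_apply]

def rotM (θ : ℝ) : Matrix (Fin 3) (Fin 3) ℝ :=
  !![1, 0, 0; 0, Real.cos θ, -Real.sin θ; 0, Real.sin θ, Real.cos θ]
def bM01 (t : ℝ) : Matrix (Fin 3) (Fin 3) ℝ :=
  !![Real.cosh t, Real.sinh t, 0; Real.sinh t, Real.cosh t, 0; 0, 0, 1]
def bM02 (t : ℝ) : Matrix (Fin 3) (Fin 3) ℝ :=
  !![Real.cosh t, 0, Real.sinh t; 0, 1, 0; Real.sinh t, 0, Real.cosh t]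

lemma rotM_quadric (θ : ℝ) : (rotM θ)ᵀ * eta3 * rotM θ = eta3 := by
  have h := Real.sin_sq_add_cos_sq θ
  ext i j
  fin_cases i <;> fin_cases j <;>
    simp [rotM, eta3, Matrix.mul_apply, Fin.sum_univ_three, Matrix.diagonal, Matrix.transpose_apply, Matrix.vecHead, Matrix.vecTail] <;>
    nlinarith [h]

lemma bM01_quadric (t : ℝ) : (bM01 t)ᵀ * eta3 * bM01 t = eta3 := by
  have h := Real.cosh_sq_sub_sinh_sq t
  ext i j
  fin_cases i <;> fin_cases j <;>
    simp [bM01, eta3, Matrix.mul_apply, Fin.sum_univ_three, Matrix.diagonal, Matrix.transpose_apply, Matrix.vecHead, Matrix.vecTail] <;>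
    nlinarith [h]

lemma bM02_quadric (t : ℝ) : (bM02 t)ᵀ * eta3 * bM02 t = eta3 := by
  have h := Real.cosh_sq_sub_sinh_sq t
  ext i j
  fin_cases i <;> fin_cases j <;>
    simp [bM02, eta3, Matrix.mul_apply, Fin.sum_univ_three, Matrix.diagonal, Matrix.transpose_apply, Matrix.vecHead, Matrix.vecTail] <;>
    nlinarith [h]

lemma mem_SOo12_of_path (f : ℝ → Matrix (Fin 3) (Fin 3) ℝ) (hc : Continuous f)
    (h0 : f 0 = 1) (hq : ∀ t, f t ∈ {g : Matrix (Fin 3) (Fin 3) ℝ | gᵀ * eta3 * g = eta3})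
    (t : ℝ) : f t ∈ SOo12 := by
  have hpre : IsPreconnected (Set.range f) := by
    rw [← Set.image_univ]
    exact isPreconnected_univ.image f hc.continuousOn
  have h1 : (1 : Matrix (Fin 3) (Fin 3) ℝ) ∈ Set.range f := ⟨0, h0⟩
  have hsub : Set.range f ⊆ {g : Matrix (Fin 3) (Fin 3) ℝ | gᵀ * eta3 * g = eta3} := by
    rintro _ ⟨t, rfl⟩; exact hq t
  exact hpre.subset_connectedComponentIn h1 hsub ⟨t, rfl⟩

lemma rotM_cont : Continuous rotM := by
  apply continuous_matrix
  intro i j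
  fin_cases i <;> fin_cases j <;> simp [rotM] <;> fun_prop

lemma bM01_cont : Continuous bM01 := by
  apply continuous_matrix
  intro i j
  fin_cases i <;> fin_cases j <;> simp [bM01] <;> fun_prop

lemma bM02_cont : Continuous bM02 := by
  apply continuous_matrix
  intro i j
  fin_cases i <;> fin_cases j <;> simp [bM02] <;> fun_prop

lemma rotM_mem (θ : ℝ) : rotM θ ∈ SOo12 := by
  have := mem_SOo12_of_path (fun u => rotM (u * θ)) (rotM_cont.comp (by fun_prop))
    (by ext i j; fin_cases i <;> fin_cases j <;> simp [rotM, Matrix.one_apply, Matrix.vecHead, Matrix.vecTail])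
    (fun u => rotM_quadric _) 1
  simpa using this

lemma bM01_mem (t : ℝ) : bM01 t ∈ SOo12 := by
  have := mem_SOo12_of_path (fun u => bM01 (u * t)) (bM01_cont.comp (by fun_prop))
    (by ext i j; fin_cases i <;> fin_cases j <;> simp [bM01, Matrix.one_apply, Matrix.vecHead, Matrix.vecTail])
    (fun u => bM01_quadric _) 1
  simpa using this

lemma bM02_mem (t : ℝ) : bM02 t ∈ SOo12 := by
  have := mem_SOo12_of_path (fun u => bM02 (u * t)) (bM02_cont.comp (by fun_prop))
    (by ext i j; fin_cases i <;> fin_cases j <;> simp [bM02, Matrix.one_apply, Matrix.vecHead, Matrix.vecTail])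
    (fun u => bM02_quadric _) 1
  simpa using this

lemma rot_mv0 (θ : ℝ) : (rotM θ).mulVec (E3 0) = E3 0 := by
  funext j; fin_cases j <;>
    simp [rotM, Matrix.mulVec, dotProduct, E3, Pi.single_apply, Fin.sum_univ_three]
lemma rot_mv1 (θ : ℝ) :
    (rotM θ).mulVec (E3 1) = Real.cos θ • E3 1 + Real.sin θ • E3 2 := by
  funext j; fin_cases j <;>
    simp [rotM, Matrix.mulVec, dotProduct, E3, Pi.single_apply, Fin.sum_univ_three]
lemma rot_mv2 (θ : ℝ) :
    (rotM θ).mulVec (E3 2) = (-Real.sin θ) • E3 1 + Real.cos θ • E3 2 := by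
  funext j; fin_cases j <;>
    simp [rotM, Matrix.mulVec, dotProduct, E3, Pi.single_apply, Fin.sum_univ_three]
lemma b01_mv0 (t : ℝ) :
    (bM01 t).mulVec (E3 0) = Real.cosh t • E3 0 + Real.sinh t • E3 1 := by
  funext j; fin_cases j <;>
    simp [bM01, Matrix.mulVec, dotProduct, E3, Pi.single_apply, Fin.sum_univ_three]
lemma b01_mv1 (t : ℝ) :
    (bM01 t).mulVec (E3 1) = Real.sinh t • E3 0 + Real.cosh t • E3 1 := by
  funext j; fin_cases j <;>
    simp [bM01, Matrix.mulVec, dotProduct, E3, Pi.single_apply, Fin.sum_univ_three]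
lemma b01_mv2 (t : ℝ) : (bM01 t).mulVec (E3 2) = E3 2 := by
  funext j; fin_cases j <;>
    simp [bM01, Matrix.mulVec, dotProduct, E3, Pi.single_apply, Fin.sum_univ_three]
lemma b02_mv0 (t : ℝ) :
    (bM02 t).mulVec (E3 0) = Real.cosh t • E3 0 + Real.sinh t • E3 2 := by
  funext j; fin_cases j <;>
    simp [bM02, Matrix.mulVec, dotProduct, E3, Pi.single_apply, Fin.sum_univ_three]
lemma b02_mv1 (t : ℝ) : (bM02 t).mulVec (E3 1) = E3 1 := by
  funext j; fin_cases j <;>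
    simp [bM02, Matrix.mulVec, dotProduct, E3, Pi.single_apply, Fin.sum_univ_three]
lemma b02_mv2 (t : ℝ) :
    (bM02 t).mulVec (E3 2) = Real.sinh t • E3 0 + Real.cosh t • E3 2 := by
  funext j; fin_cases j <;>
    simp [bM02, Matrix.mulVec, dotProduct, E3, Pi.single_apply, Fin.sum_univ_three]


lemma part5 (ω : AlternatingMap ℝ T34 ℝ (Fin 3)) (hinv : IsInvOmega ω) :
    ∃! σ, IsSymm3 σ ∧ RelOmega σ ω := by
  have inv3 : ∀ g ∈ SOo12, ∀ (x y z : Fin 3 → ℝ) (q r s : Fin 4 → ℝ),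
      ω ![(g.mulVec x) ⊗ₜ[ℝ] q, (g.mulVec y) ⊗ₜ[ℝ] r, (g.mulVec z) ⊗ₜ[ℝ] s]
        = ω ![x ⊗ₜ[ℝ] q, y ⊗ₜ[ℝ] r, z ⊗ₜ[ℝ] s] := by
    intro g hg x y z q r s
    have h := hinv g hg ![x ⊗ₜ[ℝ] q, y ⊗ₜ[ℝ] r, z ⊗ₜ[ℝ] s]
    rw [show (fun i => TensorProduct.map g.mulVecLin LinearMap.id
          (![x ⊗ₜ[ℝ] q, y ⊗ₜ[ℝ] r, z ⊗ₜ[ℝ] s] i))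
        = ![(g.mulVec x) ⊗ₜ[ℝ] q, (g.mulVec y) ⊗ₜ[ℝ] r, (g.mulVec z) ⊗ₜ[ℝ] s] from by
      funext i; fin_cases i <;> simp [TensorProduct.map_tmul]] at h
    exact h
  have hcs : Real.cosh 1 ^ 2 - Real.sinh 1 ^ 2 = 1 := Real.cosh_sq_sub_sinh_sq 1
  have hc1 : 1 < Real.cosh 1 := Real.one_lt_cosh.mpr one_ne_zero
  have hs0 : (0:ℝ) < Real.sinh 1 := Real.sinh_pos_iff.mpr one_pos
  have z001 : ∀ q r s : Fin 4 → ℝ,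
      ω ![E3 0 ⊗ₜ[ℝ] q, E3 0 ⊗ₜ[ℝ] r, E3 1 ⊗ₜ[ℝ] s] = 0 := by
    intro q r s
    have h := inv3 (rotM Real.pi) (rotM_mem Real.pi) (E3 0) (E3 0) (E3 1) q r s
    rw [rot_mv0, rot_mv1] at h
    simp only [Real.cos_pi, Real.sin_pi, add_tmul, ← smul_tmul', ω_add₁, ω_add₂, ω_add₃,
      ω_smul₁, ω_smul₂, ω_smul₃] at h
    linarith
  have z010 : ∀ q r s : Fin 4 → ℝ,
      ω ![E3 0 ⊗ₜ[ℝ] q, E3 1 ⊗ₜ[ℝ] r, E3 0 ⊗ₜ[ℝ] s] = 0 := by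
    intro q r s
    have h := inv3 (rotM Real.pi) (rotM_mem Real.pi) (E3 0) (E3 1) (E3 0) q r s
    rw [rot_mv0, rot_mv1] at h
    simp only [Real.cos_pi, Real.sin_pi, add_tmul, ← smul_tmul', ω_add₁, ω_add₂, ω_add₃,
      ω_smul₁, ω_smul₂, ω_smul₃] at h
    linarith
  have z100 : ∀ q r s : Fin 4 → ℝ,
      ω ![E3 1 ⊗ₜ[ℝ] q, E3 0 ⊗ₜ[ℝ] r, E3 0 ⊗ₜ[ℝ] s] = 0 := by
    intro q r s
    have h := inv3 (rotM Real.pi) (rotM_mem Real.pi) (E3 1) (E3 0) (E3 0) q r s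
    rw [rot_mv0, rot_mv1] at h
    simp only [Real.cos_pi, Real.sin_pi, add_tmul, ← smul_tmul', ω_add₁, ω_add₂, ω_add₃,
      ω_smul₁, ω_smul₂, ω_smul₃] at h
    linarith
  have z002 : ∀ q r s : Fin 4 → ℝ,
      ω ![E3 0 ⊗ₜ[ℝ] q, E3 0 ⊗ₜ[ℝ] r, E3 2 ⊗ₜ[ℝ] s] = 0 := by
    intro q r s
    have h := inv3 (rotM Real.pi) (rotM_mem Real.pi) (E3 0) (E3 0) (E3 2) q r s
    rw [rot_mv0, rot_mv2] at h
    simp only [Real.cos_pi, Real.sin_pi, add_tmul, ← smul_tmul', ω_add₁, ω_add₂, ω_add₃,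
      ω_smul₁, ω_smul₂, ω_smul₃] at h
    linarith
  have z020 : ∀ q r s : Fin 4 → ℝ,
      ω ![E3 0 ⊗ₜ[ℝ] q, E3 2 ⊗ₜ[ℝ] r, E3 0 ⊗ₜ[ℝ] s] = 0 := by
    intro q r s
    have h := inv3 (rotM Real.pi) (rotM_mem Real.pi) (E3 0) (E3 2) (E3 0) q r s
    rw [rot_mv0, rot_mv2] at h
    simp only [Real.cos_pi, Real.sin_pi, add_tmul, ← smul_tmul', ω_add₁, ω_add₂, ω_add₃,
      ω_smul₁, ω_smul₂, ω_smul₃] at h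
    linarith
  have z200 : ∀ q r s : Fin 4 → ℝ,
      ω ![E3 2 ⊗ₜ[ℝ] q, E3 0 ⊗ₜ[ℝ] r, E3 0 ⊗ₜ[ℝ] s] = 0 := by
    intro q r s
    have h := inv3 (rotM Real.pi) (rotM_mem Real.pi) (E3 2) (E3 0) (E3 0) q r s
    rw [rot_mv0, rot_mv2] at h
    simp only [Real.cos_pi, Real.sin_pi, add_tmul, ← smul_tmul', ω_add₁, ω_add₂, ω_add₃,
      ω_smul₁, ω_smul₂, ω_smul₃] at h
    linarith
  have z111 : ∀ q r s : Fin 4 → ℝ,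
      ω ![E3 1 ⊗ₜ[ℝ] q, E3 1 ⊗ₜ[ℝ] r, E3 1 ⊗ₜ[ℝ] s] = 0 := by
    intro q r s
    have h := inv3 (rotM Real.pi) (rotM_mem Real.pi) (E3 1) (E3 1) (E3 1) q r s
    rw [rot_mv1] at h
    simp only [Real.cos_pi, Real.sin_pi, add_tmul, ← smul_tmul', ω_add₁, ω_add₂, ω_add₃,
      ω_smul₁, ω_smul₂, ω_smul₃] at h
    linarith
  have z112 : ∀ q r s : Fin 4 → ℝ,
      ω ![E3 1 ⊗ₜ[ℝ] q, E3 1 ⊗ₜ[ℝ] r, E3 2 ⊗ₜ[ℝ] s] = 0 := by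
    intro q r s
    have h := inv3 (rotM Real.pi) (rotM_mem Real.pi) (E3 1) (E3 1) (E3 2) q r s
    rw [rot_mv1, rot_mv2] at h
    simp only [Real.cos_pi, Real.sin_pi, add_tmul, ← smul_tmul', ω_add₁, ω_add₂, ω_add₃,
      ω_smul₁, ω_smul₂, ω_smul₃] at h
    linarith
  have z121 : ∀ q r s : Fin 4 → ℝ,
      ω ![E3 1 ⊗ₜ[ℝ] q, E3 2 ⊗ₜ[ℝ] r, E3 1 ⊗ₜ[ℝ] s] = 0 := by
    intro q r s
    have h := inv3 (rotM Real.pi) (rotM_mem Real.pi) (E3 1) (E3 2) (E3 1) q r s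
    rw [rot_mv1, rot_mv2] at h
    simp only [Real.cos_pi, Real.sin_pi, add_tmul, ← smul_tmul', ω_add₁, ω_add₂, ω_add₃,
      ω_smul₁, ω_smul₂, ω_smul₃] at h
    linarith
  have z211 : ∀ q r s : Fin 4 → ℝ,
      ω ![E3 2 ⊗ₜ[ℝ] q, E3 1 ⊗ₜ[ℝ] r, E3 1 ⊗ₜ[ℝ] s] = 0 := by
    intro q r s
    have h := inv3 (rotM Real.pi) (rotM_mem Real.pi) (E3 2) (E3 1) (E3 1) q r s
    rw [rot_mv1, rot_mv2] at h
    simp only [Real.cos_pi, Real.sin_pi, add_tmul, ← smul_tmul', ω_add₁, ω_add₂, ω_add₃,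
      ω_smul₁, ω_smul₂, ω_smul₃] at h
    linarith
  have z122 : ∀ q r s : Fin 4 → ℝ,
      ω ![E3 1 ⊗ₜ[ℝ] q, E3 2 ⊗ₜ[ℝ] r, E3 2 ⊗ₜ[ℝ] s] = 0 := by
    intro q r s
    have h := inv3 (rotM Real.pi) (rotM_mem Real.pi) (E3 1) (E3 2) (E3 2) q r s
    rw [rot_mv1, rot_mv2] at h
    simp only [Real.cos_pi, Real.sin_pi, add_tmul, ← smul_tmul', ω_add₁, ω_add₂, ω_add₃,
      ω_smul₁, ω_smul₂, ω_smul₃] at h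
    linarith
  have z212 : ∀ q r s : Fin 4 → ℝ,
      ω ![E3 2 ⊗ₜ[ℝ] q, E3 1 ⊗ₜ[ℝ] r, E3 2 ⊗ₜ[ℝ] s] = 0 := by
    intro q r s
    have h := inv3 (rotM Real.pi) (rotM_mem Real.pi) (E3 2) (E3 1) (E3 2) q r s
    rw [rot_mv1, rot_mv2] at h
    simp only [Real.cos_pi, Real.sin_pi, add_tmul, ← smul_tmul', ω_add₁, ω_add₂, ω_add₃,
      ω_smul₁, ω_smul₂, ω_smul₃] at h
    linarith
  have z221 : ∀ q r s : Fin 4 → ℝ,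
      ω ![E3 2 ⊗ₜ[ℝ] q, E3 2 ⊗ₜ[ℝ] r, E3 1 ⊗ₜ[ℝ] s] = 0 := by
    intro q r s
    have h := inv3 (rotM Real.pi) (rotM_mem Real.pi) (E3 2) (E3 2) (E3 1) q r s
    rw [rot_mv1, rot_mv2] at h
    simp only [Real.cos_pi, Real.sin_pi, add_tmul, ← smul_tmul', ω_add₁, ω_add₂, ω_add₃,
      ω_smul₁, ω_smul₂, ω_smul₃] at h
    linarith
  have z222 : ∀ q r s : Fin 4 → ℝ,
      ω ![E3 2 ⊗ₜ[ℝ] q, E3 2 ⊗ₜ[ℝ] r, E3 2 ⊗ₜ[ℝ] s] = 0 := by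
    intro q r s
    have h := inv3 (rotM Real.pi) (rotM_mem Real.pi) (E3 2) (E3 2) (E3 2) q r s
    rw [rot_mv2] at h
    simp only [Real.cos_pi, Real.sin_pi, add_tmul, ← smul_tmul', ω_add₁, ω_add₂, ω_add₃,
      ω_smul₁, ω_smul₂, ω_smul₃] at h
    linarith
  have z011 : ∀ q r s : Fin 4 → ℝ,
      ω ![E3 0 ⊗ₜ[ℝ] q, E3 1 ⊗ₜ[ℝ] r, E3 1 ⊗ₜ[ℝ] s] = 0 := by
    intro q r s
    have h := inv3 (bM02 1) (bM02_mem 1) (E3 0) (E3 1) (E3 1) q r s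
    rw [b02_mv0, b02_mv1] at h
    simp only [add_tmul, ← smul_tmul', ω_add₁, ω_add₂, ω_add₃, ω_smul₁, ω_smul₂, ω_smul₃] at h
    have h' : (Real.cosh 1 - 1) * ω ![E3 0 ⊗ₜ[ℝ] q, E3 1 ⊗ₜ[ℝ] r, E3 1 ⊗ₜ[ℝ] s] = 0 := by
      linear_combination h - Real.sinh 1 * z211 q r s
    exact (mul_eq_zero.mp h').resolve_left (by linarith)
  have z101 : ∀ q r s : Fin 4 → ℝ,
      ω ![E3 1 ⊗ₜ[ℝ] q, E3 0 ⊗ₜ[ℝ] r, E3 1 ⊗ₜ[ℝ] s] = 0 := by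
    intro q r s
    have h := inv3 (bM02 1) (bM02_mem 1) (E3 1) (E3 0) (E3 1) q r s
    rw [b02_mv0, b02_mv1] at h
    simp only [add_tmul, ← smul_tmul', ω_add₁, ω_add₂, ω_add₃, ω_smul₁, ω_smul₂, ω_smul₃] at h
    have h' : (Real.cosh 1 - 1) * ω ![E3 1 ⊗ₜ[ℝ] q, E3 0 ⊗ₜ[ℝ] r, E3 1 ⊗ₜ[ℝ] s] = 0 := by
      linear_combination h - Real.sinh 1 * z121 q r s
    exact (mul_eq_zero.mp h').resolve_left (by linarith)
  have z110 : ∀ q r s : Fin 4 → ℝ,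
      ω ![E3 1 ⊗ₜ[ℝ] q, E3 1 ⊗ₜ[ℝ] r, E3 0 ⊗ₜ[ℝ] s] = 0 := by
    intro q r s
    have h := inv3 (bM02 1) (bM02_mem 1) (E3 1) (E3 1) (E3 0) q r s
    rw [b02_mv0, b02_mv1] at h
    simp only [add_tmul, ← smul_tmul', ω_add₁, ω_add₂, ω_add₃, ω_smul₁, ω_smul₂, ω_smul₃] at h
    have h' : (Real.cosh 1 - 1) * ω ![E3 1 ⊗ₜ[ℝ] q, E3 1 ⊗ₜ[ℝ] r, E3 0 ⊗ₜ[ℝ] s] = 0 := by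
      linear_combination h - Real.sinh 1 * z112 q r s
    exact (mul_eq_zero.mp h').resolve_left (by linarith)
  have z022 : ∀ q r s : Fin 4 → ℝ,
      ω ![E3 0 ⊗ₜ[ℝ] q, E3 2 ⊗ₜ[ℝ] r, E3 2 ⊗ₜ[ℝ] s] = 0 := by
    intro q r s
    have h := inv3 (bM01 1) (bM01_mem 1) (E3 0) (E3 2) (E3 2) q r s
    rw [b01_mv0, b01_mv2] at h
    simp only [add_tmul, ← smul_tmul', ω_add₁, ω_add₂, ω_add₃, ω_smul₁, ω_smul₂, ω_smul₃] at h
    have h' : (Real.cosh 1 - 1) * ω ![E3 0 ⊗ₜ[ℝ] q, E3 2 ⊗ₜ[ℝ] r, E3 2 ⊗ₜ[ℝ] s] = 0 := by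
      linear_combination h - Real.sinh 1 * z122 q r s
    exact (mul_eq_zero.mp h').resolve_left (by linarith)
  have z202 : ∀ q r s : Fin 4 → ℝ,
      ω ![E3 2 ⊗ₜ[ℝ] q, E3 0 ⊗ₜ[ℝ] r, E3 2 ⊗ₜ[ℝ] s] = 0 := by
    intro q r s
    have h := inv3 (bM01 1) (bM01_mem 1) (E3 2) (E3 0) (E3 2) q r s
    rw [b01_mv0, b01_mv2] at h
    simp only [add_tmul, ← smul_tmul', ω_add₁, ω_add₂, ω_add₃, ω_smul₁, ω_smul₂, ω_smul₃] at h
    have h' : (Real.cosh 1 - 1) * ω ![E3 2 ⊗ₜ[ℝ] q, E3 0 ⊗ₜ[ℝ] r, E3 2 ⊗ₜ[ℝ] s] = 0 := by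
      linear_combination h - Real.sinh 1 * z212 q r s
    exact (mul_eq_zero.mp h').resolve_left (by linarith)
  have z220 : ∀ q r s : Fin 4 → ℝ,
      ω ![E3 2 ⊗ₜ[ℝ] q, E3 2 ⊗ₜ[ℝ] r, E3 0 ⊗ₜ[ℝ] s] = 0 := by
    intro q r s
    have h := inv3 (bM01 1) (bM01_mem 1) (E3 2) (E3 2) (E3 0) q r s
    rw [b01_mv0, b01_mv2] at h
    simp only [add_tmul, ← smul_tmul', ω_add₁, ω_add₂, ω_add₃, ω_smul₁, ω_smul₂, ω_smul₃] at h
    have h' : (Real.cosh 1 - 1) * ω ![E3 2 ⊗ₜ[ℝ] q, E3 2 ⊗ₜ[ℝ] r, E3 0 ⊗ₜ[ℝ] s] = 0 := by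
      linear_combination h - Real.sinh 1 * z221 q r s
    exact (mul_eq_zero.mp h').resolve_left (by linarith)
  have z000 : ∀ q r s : Fin 4 → ℝ,
      ω ![E3 0 ⊗ₜ[ℝ] q, E3 0 ⊗ₜ[ℝ] r, E3 0 ⊗ₜ[ℝ] s] = 0 := by
    intro q r s
    have h := inv3 (bM01 1) (bM01_mem 1) (E3 0) (E3 0) (E3 0) q r s
    rw [b01_mv0] at h
    simp only [add_tmul, ← smul_tmul', ω_add₁, ω_add₂, ω_add₃, ω_smul₁, ω_smul₂, ω_smul₃] at h
    have h' : (Real.cosh 1 ^ 3 - 1) * ω ![E3 0 ⊗ₜ[ℝ] q, E3 0 ⊗ₜ[ℝ] r, E3 0 ⊗ₜ[ℝ] s] = 0 := by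
      linear_combination h
        - (Real.cosh 1 * Real.cosh 1 * Real.sinh 1) * z001 q r s
        - (Real.cosh 1 * Real.sinh 1 * Real.cosh 1) * z010 q r s
        - (Real.sinh 1 * Real.cosh 1 * Real.cosh 1) * z100 q r s
        - (Real.cosh 1 * Real.sinh 1 * Real.sinh 1) * z011 q r s
        - (Real.sinh 1 * Real.cosh 1 * Real.sinh 1) * z101 q r s
        - (Real.sinh 1 * Real.sinh 1 * Real.cosh 1) * z110 q r s
        - (Real.sinh 1 * Real.sinh 1 * Real.sinh 1) * z111 q r s
    refine (mul_eq_zero.mp h').resolve_left ?_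
    have : 1 < Real.cosh 1 ^ 3 := by nlinarith
    linarith
  -- symmetry of σ in the last two arguments
  have hs2 : ∀ q r s : Fin 4 → ℝ,
      ω ![E3 0 ⊗ₜ[ℝ] q, E3 1 ⊗ₜ[ℝ] r, E3 2 ⊗ₜ[ℝ] s]
        = ω ![E3 0 ⊗ₜ[ℝ] q, E3 1 ⊗ₜ[ℝ] s, E3 2 ⊗ₜ[ℝ] r] := by
    intro q r s
    have h := inv3 (rotM (Real.pi/2)) (rotM_mem (Real.pi/2)) (E3 0) (E3 1) (E3 2) q r s
    rw [rot_mv0, rot_mv1, rot_mv2] at h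
    simp only [Real.cos_pi_div_two, Real.sin_pi_div_two, add_tmul, ← smul_tmul',
      ω_add₁, ω_add₂, ω_add₃, ω_smul₁, ω_smul₂, ω_smul₃] at h
    have hsw : ω ![E3 0 ⊗ₜ[ℝ] q, E3 2 ⊗ₜ[ℝ] r, E3 1 ⊗ₜ[ℝ] s]
        = -ω ![E3 0 ⊗ₜ[ℝ] q, E3 1 ⊗ₜ[ℝ] s, E3 2 ⊗ₜ[ℝ] r] :=
      ω_swap₂₃ ω (E3 0 ⊗ₜ[ℝ] q) (E3 1 ⊗ₜ[ℝ] s) (E3 2 ⊗ₜ[ℝ] r)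
    linarith
  -- symmetry of σ in the first two arguments
  have hs1 : ∀ q r s : Fin 4 → ℝ,
      ω ![E3 0 ⊗ₜ[ℝ] q, E3 1 ⊗ₜ[ℝ] r, E3 2 ⊗ₜ[ℝ] s]
        = ω ![E3 0 ⊗ₜ[ℝ] r, E3 1 ⊗ₜ[ℝ] q, E3 2 ⊗ₜ[ℝ] s] := by
    intro q r s
    have h := inv3 (bM01 1) (bM01_mem 1) (E3 0) (E3 1) (E3 2) q r s
    rw [b01_mv0, b01_mv1, b01_mv2] at h
    simp only [add_tmul, ← smul_tmul', ω_add₁, ω_add₂, ω_add₃, ω_smul₁, ω_smul₂, ω_smul₃] at h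
    have hsw : ω ![E3 1 ⊗ₜ[ℝ] q, E3 0 ⊗ₜ[ℝ] r, E3 2 ⊗ₜ[ℝ] s]
        = -ω ![E3 0 ⊗ₜ[ℝ] r, E3 1 ⊗ₜ[ℝ] q, E3 2 ⊗ₜ[ℝ] s] :=
      ω_swap₁₂ ω (E3 0 ⊗ₜ[ℝ] r) (E3 1 ⊗ₜ[ℝ] q) (E3 2 ⊗ₜ[ℝ] s)
    have h' : Real.sinh 1 ^ 2 * (ω ![E3 0 ⊗ₜ[ℝ] q, E3 1 ⊗ₜ[ℝ] r, E3 2 ⊗ₜ[ℝ] s]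
        - ω ![E3 0 ⊗ₜ[ℝ] r, E3 1 ⊗ₜ[ℝ] q, E3 2 ⊗ₜ[ℝ] s]) = 0 := by
      linear_combination h - (Real.cosh 1 * Real.sinh 1) * z002 q r s
        - (Real.sinh 1 * Real.cosh 1) * z112 q r s
        - Real.sinh 1 ^ 2 * hsw
        - ω ![E3 0 ⊗ₜ[ℝ] q, E3 1 ⊗ₜ[ℝ] r, E3 2 ⊗ₜ[ℝ] s] * hcs
    have := (mul_eq_zero.mp h').resolve_left (by positivity)
    linarith
  -- permuted value facts
  have v021 : ∀ q r s : Fin 4 → ℝ,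
      ω ![E3 0 ⊗ₜ[ℝ] q, E3 2 ⊗ₜ[ℝ] r, E3 1 ⊗ₜ[ℝ] s]
        = -ω ![E3 0 ⊗ₜ[ℝ] q, E3 1 ⊗ₜ[ℝ] r, E3 2 ⊗ₜ[ℝ] s] := by
    intro q r s
    have h := ω_swap₂₃ ω (E3 0 ⊗ₜ[ℝ] q) (E3 1 ⊗ₜ[ℝ] s) (E3 2 ⊗ₜ[ℝ] r)
    have h2 := hs2 q s r
    linarith
  have v102 : ∀ q r s : Fin 4 → ℝ,
      ω ![E3 1 ⊗ₜ[ℝ] q, E3 0 ⊗ₜ[ℝ] r, E3 2 ⊗ₜ[ℝ] s]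
        = -ω ![E3 0 ⊗ₜ[ℝ] q, E3 1 ⊗ₜ[ℝ] r, E3 2 ⊗ₜ[ℝ] s] := by
    intro q r s
    have h := ω_swap₁₂ ω (E3 0 ⊗ₜ[ℝ] r) (E3 1 ⊗ₜ[ℝ] q) (E3 2 ⊗ₜ[ℝ] s)
    have h2 := hs1 q r s
    linarith
  have v120 : ∀ q r s : Fin 4 → ℝ,
      ω ![E3 1 ⊗ₜ[ℝ] q, E3 2 ⊗ₜ[ℝ] r, E3 0 ⊗ₜ[ℝ] s]
        = ω ![E3 0 ⊗ₜ[ℝ] q, E3 1 ⊗ₜ[ℝ] r, E3 2 ⊗ₜ[ℝ] s] := by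
    intro q r s
    -- ![E1 q, E2 r, E0 s] = -![E1 q, E0 s, E2 r] = ![E0 s, E1 q, E2 r] = F s q r
    have h1 := ω_swap₂₃ ω (E3 1 ⊗ₜ[ℝ] q) (E3 0 ⊗ₜ[ℝ] s) (E3 2 ⊗ₜ[ℝ] r)
    have h2 := ω_swap₁₂ ω (E3 0 ⊗ₜ[ℝ] s) (E3 1 ⊗ₜ[ℝ] q) (E3 2 ⊗ₜ[ℝ] r)
    -- F s q r = F q s r = F q r s
    have h3 := hs1 s q r
    have h4 := hs2 q s r
    linarith
  have v201 : ∀ q r s : Fin 4 → ℝ,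
      ω ![E3 2 ⊗ₜ[ℝ] q, E3 0 ⊗ₜ[ℝ] r, E3 1 ⊗ₜ[ℝ] s]
        = ω ![E3 0 ⊗ₜ[ℝ] q, E3 1 ⊗ₜ[ℝ] r, E3 2 ⊗ₜ[ℝ] s] := by
    intro q r s
    -- ![E2 q, E0 r, E1 s] = -![E0 r, E2 q, E1 s] = ![E0 r, E1 s, E2 q] = F r s q
    have h1 := ω_swap₁₂ ω (E3 0 ⊗ₜ[ℝ] r) (E3 2 ⊗ₜ[ℝ] q) (E3 1 ⊗ₜ[ℝ] s)
    have h2 := ω_swap₂₃ ω (E3 0 ⊗ₜ[ℝ] r) (E3 1 ⊗ₜ[ℝ] s) (E3 2 ⊗ₜ[ℝ] q)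
    -- F r s q = F r q s = F q r s
    have h3 := hs2 r s q
    have h4 := hs1 r q s
    linarith
  have v210 : ∀ q r s : Fin 4 → ℝ,
      ω ![E3 2 ⊗ₜ[ℝ] q, E3 1 ⊗ₜ[ℝ] r, E3 0 ⊗ₜ[ℝ] s]
        = -ω ![E3 0 ⊗ₜ[ℝ] q, E3 1 ⊗ₜ[ℝ] r, E3 2 ⊗ₜ[ℝ] s] := by
    intro q r s
    -- ![E2 q, E1 r, E0 s] = -![E1 r, E2 q, E0 s] = -F r q s (by v120) = -F q r s
    have h1 := ω_swap₁₂ ω (E3 1 ⊗ₜ[ℝ] r) (E3 2 ⊗ₜ[ℝ] q) (E3 0 ⊗ₜ[ℝ] s)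
    have h2 := v120 r q s
    have h3 := hs1 r q s
    linarith
  -- linearity of the candidate symmetric form
  have hadd1 : ∀ q q' r s : Fin 4 → ℝ,
      ω ![E3 0 ⊗ₜ[ℝ] (q + q'), E3 1 ⊗ₜ[ℝ] r, E3 2 ⊗ₜ[ℝ] s]
        = ω ![E3 0 ⊗ₜ[ℝ] q, E3 1 ⊗ₜ[ℝ] r, E3 2 ⊗ₜ[ℝ] s]
          + ω ![E3 0 ⊗ₜ[ℝ] q', E3 1 ⊗ₜ[ℝ] r, E3 2 ⊗ₜ[ℝ] s] := by
    intro q q' r s; rw [TensorProduct.tmul_add, ω_add₁]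
  have hsm1 : ∀ (c : ℝ) (q r s : Fin 4 → ℝ),
      ω ![E3 0 ⊗ₜ[ℝ] (c • q), E3 1 ⊗ₜ[ℝ] r, E3 2 ⊗ₜ[ℝ] s]
        = c * ω ![E3 0 ⊗ₜ[ℝ] q, E3 1 ⊗ₜ[ℝ] r, E3 2 ⊗ₜ[ℝ] s] := by
    intro c q r s; rw [TensorProduct.tmul_smul, ω_smul₁]
  have hadd2 : ∀ q r r' s : Fin 4 → ℝ,
      ω ![E3 0 ⊗ₜ[ℝ] q, E3 1 ⊗ₜ[ℝ] (r + r'), E3 2 ⊗ₜ[ℝ] s]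
        = ω ![E3 0 ⊗ₜ[ℝ] q, E3 1 ⊗ₜ[ℝ] r, E3 2 ⊗ₜ[ℝ] s]
          + ω ![E3 0 ⊗ₜ[ℝ] q, E3 1 ⊗ₜ[ℝ] r', E3 2 ⊗ₜ[ℝ] s] := by
    intro q r r' s; rw [TensorProduct.tmul_add, ω_add₂]
  have hsm2 : ∀ (c : ℝ) (q r s : Fin 4 → ℝ),
      ω ![E3 0 ⊗ₜ[ℝ] q, E3 1 ⊗ₜ[ℝ] (c • r), E3 2 ⊗ₜ[ℝ] s]
        = c * ω ![E3 0 ⊗ₜ[ℝ] q, E3 1 ⊗ₜ[ℝ] r, E3 2 ⊗ₜ[ℝ] s] := by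
    intro c q r s; rw [TensorProduct.tmul_smul, ω_smul₂]
  have hadd3 : ∀ q r s s' : Fin 4 → ℝ,
      ω ![E3 0 ⊗ₜ[ℝ] q, E3 1 ⊗ₜ[ℝ] r, E3 2 ⊗ₜ[ℝ] (s + s')]
        = ω ![E3 0 ⊗ₜ[ℝ] q, E3 1 ⊗ₜ[ℝ] r, E3 2 ⊗ₜ[ℝ] s]
          + ω ![E3 0 ⊗ₜ[ℝ] q, E3 1 ⊗ₜ[ℝ] r, E3 2 ⊗ₜ[ℝ] s'] := by
    intro q r s s'; rw [TensorProduct.tmul_add, ω_add₃]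
  have hsm3 : ∀ (c : ℝ) (q r s : Fin 4 → ℝ),
      ω ![E3 0 ⊗ₜ[ℝ] q, E3 1 ⊗ₜ[ℝ] r, E3 2 ⊗ₜ[ℝ] (c • s)]
        = c * ω ![E3 0 ⊗ₜ[ℝ] q, E3 1 ⊗ₜ[ℝ] r, E3 2 ⊗ₜ[ℝ] s] := by
    intro c q r s; rw [TensorProduct.tmul_smul, ω_smul₃]
  refine ⟨mk3 (fun q r s => ω ![E3 0 ⊗ₜ[ℝ] q, E3 1 ⊗ₜ[ℝ] r, E3 2 ⊗ₜ[ℝ] s])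
    hadd1 hsm1 hadd2 hsm2 hadd3 hsm3, ⟨?_, ?_⟩, ?_⟩
  · intro a b c
    rw [mk3_apply, mk3_apply, mk3_apply]
    exact ⟨hs1 a b c, hs2 a b c⟩
  · intro x y z q r s
    rw [mk3_apply]
    conv_lhs => rw [vec_expand x, vec_expand y, vec_expand z]
    simp only [add_tmul, ← smul_tmul', ω_add₁, ω_add₂, ω_add₃, ω_smul₁, ω_smul₂, ω_smul₃,
      z001 q r s, z010 q r s, z100 q r s, z002 q r s, z020 q r s, z200 q r s,
      z111 q r s, z112 q r s, z121 q r s, z211 q r s, z122 q r s, z212 q r s,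
      z221 q r s, z222 q r s, z011 q r s, z101 q r s, z110 q r s, z022 q r s,
      z202 q r s, z220 q r s, z000 q r s, v021 q r s, v102 q r s, v120 q r s,
      v201 q r s, v210 q r s]
    rw [colDet_eq]
    simp only [detB, mk3_apply]
    ring
  · rintro σ' ⟨hσ'sym, hσ'rel⟩
    refine LinearMap.ext fun q => LinearMap.ext fun r => LinearMap.ext fun s => ?_
    have h := hσ'rel (E3 0) (E3 1) (E3 2) q r s
    have hdet : colDet (E3 0) (E3 1) (E3 2) = 1 := by
      rw [colDet_eq]
      simp [detB, mk3_apply, E3, Pi.single_apply]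
    rw [hdet, one_mul] at h
    rw [mk3_apply]
    exact h.symm

/-- σ ↦ ω_σ is an ℝ-linear bijection from symmetric trilinear forms on ℝ⁴ onto
SO⁰(1,2)-invariant alternating trilinear forms on ℝ³ ⊗ ℝ⁴. -/
theorem symmetric_trilinear_equiv_invariant_alternating :
    -- ω_σ is well defined (exists and is unique) for every symmetric σ …
    (∀ σ, IsSymm3 σ → ∃! ω : AlternatingMap ℝ T34 ℝ (Fin 3), RelOmega σ ω) ∧
    -- … and is SO⁰(1,2)-invariant,
    (∀ σ, IsSymm3 σ → ∀ ω, RelOmega σ ω → IsInvOmega ω) ∧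
    -- the correspondence is ℝ-linear,
    (∀ σ σ' ω ω', RelOmega σ ω → RelOmega σ' ω' → RelOmega (σ + σ') (ω + ω')) ∧
    (∀ (c : ℝ) σ ω, RelOmega σ ω → RelOmega (c • σ) (c • ω)) ∧
    -- and it is onto the invariant alternating forms, with a unique symmetric preimage.
    (∀ ω, IsInvOmega ω → ∃! σ, IsSymm3 σ ∧ RelOmega σ ω) :=
  ⟨part1, part2, part3, part4, part5⟩
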